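/- Let μ be a probability measure on (Ω, F), let X be a nonnegative adapted process whose stopped value X_σ is F_σ-measurable for every stopping time σ, and let ρ be a stopping time. If there is a finite constant x₀ such that E_μ[X_{ρ ∧ τ}] = x₀ for every stopping time τ, then the stopped process (X_{ρ ∧ t})_{t ∈ [0,∞)} is a μ-martingale with respect to (F_t): for all s ≤ t, X_{ρ ∧ t} is μ-integrable and E_μ[X_{ρ ∧ t} | F_s] = X_{ρ ∧ s} μ-a.s. -/

import Mathlib

open MeasureTheory Filter
open scoped NNReal

/-- If `X` is a nonnegative adapted process whose stopped values are measurable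
for the stopped σ-algebras, `ρ` is a stopping time, and the expectation under the probability
measure `μ` of `X_{ρ ∧ τ}` equals the finite constant `x₀` for every stopping time `τ`, then
the stopped process `(X_{ρ ∧ t})_t` is a `μ`-martingale with respect to `ℱ`: for `s ≤ t`,
`X_{ρ ∧ t}` is `μ`-integrable and `E_μ [X_{ρ ∧ t} | F_s] = X_{ρ ∧ s}` `μ`-a.s. -/
theorem stopped_process_martingale_of_constant_sampled_expectation
    {Ω : Type*} {m : MeasurableSpace Ω} (μ : Measure Ω) [IsProbabilityMeasure μ]
    (ℱ : Filtration ℝ≥0 m)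
    (X : ℝ≥0 → Ω → ℝ)
    (hXnonneg : ∀ t ω, 0 ≤ X t ω)
    (hXadapted : Adapted ℱ X)
    (hXstopmeas : ∀ (σ : Ω → ℝ≥0) (hσ : IsStoppingTime ℱ (fun ω => (σ ω : WithTop ℝ≥0))),
      Measurable[hσ.measurableSpace] fun ω => X (σ ω) ω)
    (ρ : Ω → ℝ≥0) (hρ : IsStoppingTime ℱ (fun ω => (ρ ω : WithTop ℝ≥0)))
    (x₀ : ℝ)
    (hconst : ∀ σ : Ω → ℝ≥0, IsStoppingTime ℱ (fun ω => (σ ω : WithTop ℝ≥0)) →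
      ∫⁻ ω, ENNReal.ofReal (X (min (ρ ω) (σ ω)) ω) ∂μ = ENNReal.ofReal x₀) :
    ∀ s t : ℝ≥0, s ≤ t →
      Integrable (fun ω => X (min (ρ ω) t) ω) μ ∧
        μ[(fun ω => X (min (ρ ω) t) ω) | ℱ s] =ᵐ[μ] fun ω => X (min (ρ ω) s) ω := by
  classical
  intro s t hst
  -- measurability of stopped values at constant times
  have meas : ∀ u : ℝ≥0, Measurable[ℱ u] fun ω => X (min (ρ ω) u) ω := by
    intro u
    have hmin : IsStoppingTime ℱ (fun ω => ((min (ρ ω) u : ℝ≥0) : WithTop ℝ≥0)) := by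
      have h0 := hρ.min_const u
      simp only [← WithTop.coe_min] at h0
      exact h0
    have h := hXstopmeas _ hmin
    exact h.mono (hmin.measurableSpace_le_of_le_const fun ω =>
      WithTop.coe_le_coe.mpr (min_le_right _ _)) le_rfl
  -- integrability of general stopped values given the lintegral identity
  have intgen : ∀ (σ : Ω → ℝ≥0) (hσ : IsStoppingTime ℱ (fun ω => (σ ω : WithTop ℝ≥0))),
      Integrable (fun ω => X (min (ρ ω) (σ ω)) ω) μ := by
    intro σ hσ
    have hm' : Measurable (fun ω => X (min (ρ ω) (σ ω)) ω) := by
      have hmin : IsStoppingTime ℱ (fun ω => ((min (ρ ω) (σ ω) : ℝ≥0) : WithTop ℝ≥0)) := by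
        have h0 := hρ.min hσ
        simp only [← WithTop.coe_min] at h0
        exact h0
      have h := hXstopmeas _ hmin
      exact h.mono hmin.measurableSpace_le le_rfl
    refine ⟨hm'.aestronglyMeasurable, ?_⟩
    rw [hasFiniteIntegral_iff_ofReal (Filter.Eventually.of_forall fun ω => hXnonneg _ ω)]
    rw [hconst σ hσ]
    exact ENNReal.ofReal_lt_top
  have int : ∀ u : ℝ≥0, Integrable (fun ω => X (min (ρ ω) u) ω) μ := by
    intro u
    exact intgen _ (isStoppingTime_const ℱ u)
  -- integral value of general stopped values
  have intval : ∀ (σ : Ω → ℝ≥0) (hσ : IsStoppingTime ℱ (fun ω => (σ ω : WithTop ℝ≥0))),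
      ∫ ω, X (min (ρ ω) (σ ω)) ω ∂μ = (ENNReal.ofReal x₀).toReal := by
    intro σ hσ
    rw [integral_eq_lintegral_of_nonneg_ae (Filter.Eventually.of_forall fun ω => hXnonneg _ ω)
      (intgen σ hσ).aestronglyMeasurable, hconst σ hσ]
  refine ⟨int t, ?_⟩
  haveI : SigmaFinite (μ.trim (ℱ.le s)) := by
    haveI : IsFiniteMeasure (μ.trim (ℱ.le s)) := by
      constructor
      rw [trim_measurableSet_eq _ MeasurableSet.univ]
      exact measure_lt_top μ _
    infer_instance
  have key : ∀ A : Set Ω, MeasurableSet[ℱ s] A →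
      ∫ ω in A, X (min (ρ ω) s) ω ∂μ = ∫ ω in A, X (min (ρ ω) t) ω ∂μ := by
    intro A hAs
    have hA : MeasurableSet A := ℱ.le s _ hAs
    set τ : Ω → ℝ≥0 := fun ω => if ω ∈ A then s else t with hτdef
    have hτ : IsStoppingTime ℱ (fun ω => (τ ω : WithTop ℝ≥0)) := by
      intro u
      have hset : {ω | τ ω ≤ u} = if t ≤ u then Set.univ else if s ≤ u then A else ∅ := by
        ext ω
        by_cases hω : ω ∈ A <;> by_cases h1 : t ≤ u <;> by_cases h2 : s ≤ u <;>
          simp_all [τ] <;> first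
            | exact hst.trans h1
            | exact h2 (hst.trans h1)
      have hset' : {ω | (τ ω : WithTop ℝ≥0) ≤ u} = {ω | τ ω ≤ u} := by
        ext ω
        exact WithTop.coe_le_coe
      rw [hset', hset]
      split_ifs with h1 h2
      · exact @MeasurableSet.univ _ (ℱ u)
      · exact ℱ.mono h2 _ hAs
      · exact @MeasurableSet.empty _ (ℱ u)
    have hτeq : (fun ω => X (min (ρ ω) (τ ω)) ω) =
        fun ω => if ω ∈ A then X (min (ρ ω) s) ω else X (min (ρ ω) t) ω := by
      funext ω
      by_cases hω : ω ∈ A <;> simp [τ, hω]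
    have h1 : ∫ ω, X (min (ρ ω) (τ ω)) ω ∂μ = ∫ ω, X (min (ρ ω) t) ω ∂μ := by
      rw [intval τ hτ, intval _ (isStoppingTime_const ℱ t)]
    have hiτ := intgen τ hτ
    have hsplitτ : ∫ ω, X (min (ρ ω) (τ ω)) ω ∂μ =
        (∫ ω in A, X (min (ρ ω) s) ω ∂μ) + ∫ ω in Aᶜ, X (min (ρ ω) t) ω ∂μ := by
      rw [← integral_add_compl hA hiτ]
      congr 1
      · refine setIntegral_congr_fun hA fun ω hω => ?_
        simp [τ, hω]
      · refine setIntegral_congr_fun hA.compl fun ω hω => ?_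
        simp [τ, (Set.mem_compl_iff _ _).mp hω]
    have hsplitt : ∫ ω, X (min (ρ ω) t) ω ∂μ =
        (∫ ω in A, X (min (ρ ω) t) ω ∂μ) + ∫ ω in Aᶜ, X (min (ρ ω) t) ω ∂μ :=
      (integral_add_compl hA (int t)).symm
    rw [hsplitτ, hsplitt] at h1
    linarith
  refine (ae_eq_condExp_of_forall_setIntegral_eq (ℱ.le s) (int t)
    (fun A hA _ => (int s).integrableOn) (fun A hA _ => key A hA) ?_).symm
  exact StronglyMeasurable.aestronglyMeasurable (meas s).stronglyMeasurable
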